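/- In the ridge fixed-point setting with λ > 0, fix φ ∈ (0, ∞) and ρ², σ² ≥ 0. For M ∈ ℕ and θ ∈ [φ, ∞), define the limiting subagging (with replacement) risk R^{sub}_M(θ) = σ² + (1/M)(B(θ,θ) + V(θ,θ)) + (1 − 1/M)(B(φ,θ) + V(φ,θ)), and the limiting splagging (data-splitting, without replacement) risk R^{spl}_M(θ) = σ² + (1/M′)(B(θ,θ) + V(θ,θ)) + (1 − 1/M′)·ρ² tc(θ), where M′ = min(M, ⌊θ/φ⌋). Then inf_{M ∈ ℕ, θ ∈ [φ,∞)} R^{sub}_M(θ) ≤ inf_{M ∈ ℕ, θ ∈ [φ,∞)} R^{spl}_M(θ). (Optimal subagging is at least as good as optimal splagging in terms of the limiting squared prediction risk of ridge predictors.) -/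
import Mathlib


open MeasureTheory Set

set_option maxHeartbeats 1000000

/-- Optimal subagging is at least as good as optimal splagging in terms of the
limiting squared prediction risk of ridge predictors. -/
theorem optimal_subagging_beats_optimal_splagging
    (a b : ℝ) (ha : 0 < a) (hab : a ≤ b)
    (H G : Measure ℝ) [IsProbabilityMeasure H] [IsProbabilityMeasure G]
    (hHsupp : ∀ᵐ r ∂H, r ∈ Icc a b) (hGsupp : ∀ᵐ r ∂G, r ∈ Icc a b)
    (lam : ℝ) (hlam : 0 < lam)
    (v J tc : ℝ → ℝ) (tv B V : ℝ → ℝ → ℝ)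
    (hv : ∀ θ : ℝ, 0 < θ →
      0 < v θ ∧ 1 / v θ = lam + θ * ∫ r, r / (1 + v θ * r) ∂H)
    (hJ : ∀ θ : ℝ, J θ = ∫ r, r ^ 2 / (1 + v θ * r) ^ 2 ∂H)
    (htc : ∀ θ : ℝ, tc θ = ∫ r, r / (1 + v θ * r) ^ 2 ∂G)
    (htv : ∀ ϑ θ : ℝ, tv ϑ θ = ϑ * J θ / ((1 / v θ) ^ 2 - ϑ * J θ))
    (ρ2 σ2 : ℝ) (hρ2 : 0 ≤ ρ2) (hσ2 : 0 ≤ σ2)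
    (hB : ∀ ϑ θ : ℝ, B ϑ θ = ρ2 * (1 + tv ϑ θ) * tc θ)
    (hV : ∀ ϑ θ : ℝ, V ϑ θ = σ2 * tv ϑ θ)
    (φ : ℝ) (hφ : 0 < φ)
    (Rsub Rspl : ℕ → ℝ → ℝ)
    (hRsub : ∀ (M : ℕ) (θ : ℝ), Rsub M θ =
      σ2 + (1 / (M : ℝ)) * (B θ θ + V θ θ)
        + (1 - 1 / (M : ℝ)) * (B φ θ + V φ θ))
    (hRspl : ∀ (M : ℕ) (θ : ℝ), Rspl M θ =
      σ2 + (1 / ((min M ⌊θ / φ⌋₊ : ℕ) : ℝ)) * (B θ θ + V θ θ)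
        + (1 - 1 / ((min M ⌊θ / φ⌋₊ : ℕ) : ℝ)) * (ρ2 * tc θ)) :
    sInf {x : ℝ | ∃ M : ℕ, 1 ≤ M ∧ ∃ θ : ℝ, φ ≤ θ ∧ x = Rsub M θ}
      ≤ sInf {x : ℝ | ∃ M : ℕ, 1 ≤ M ∧ ∃ θ : ℝ, φ ≤ θ ∧ x = Rspl M θ} := by
  -- Basic facts about tv and tc at any admissible θ
  have pkg : ∀ θ : ℝ, φ ≤ θ →
      0 ≤ tc θ ∧ 0 ≤ tv φ θ ∧ 0 ≤ tv θ θ ∧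
      (∀ m : ℝ, 1 ≤ m → m * φ ≤ θ → m * tv φ θ ≤ tv θ θ) := by
    intro θ hθ
    have hθ0 : 0 < θ := lt_of_lt_of_le hφ hθ
    obtain ⟨hv0, hfix⟩ := hv θ hθ0
    set w := v θ with hwdef
    have hJnn : 0 ≤ J θ := by
      rw [hJ]
      exact integral_nonneg fun r => by positivity
    have htcnn : 0 ≤ tc θ := by
      rw [htc]
      refine integral_nonneg_of_ae ?_
      filter_upwards [hGsupp] with r hr
      have hr0 : 0 < r := lt_of_lt_of_le ha hr.1
      positivity
    -- Key inequality from the fixed point equation: θ * J θ < (1/w)^2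
    have hkey : θ * J θ < (1 / w) ^ 2 := by
      set I := ∫ r, r / (1 + w * r) ∂H with hIdef
      have hmeas1 : AEStronglyMeasurable (fun r : ℝ => r ^ 2 / (1 + w * r) ^ 2) H := by
        apply Measurable.aestronglyMeasurable
        fun_prop
      have hmeas2 : AEStronglyMeasurable (fun r : ℝ => r / (w * (1 + w * r))) H := by
        apply Measurable.aestronglyMeasurable
        fun_prop
      have hint1 : Integrable (fun r : ℝ => r ^ 2 / (1 + w * r) ^ 2) H := by
        refine (integrable_const (b ^ 2)).mono' hmeas1 ?_
        filter_upwards [hHsupp] with r hr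
        have hr0 : 0 < r := lt_of_lt_of_le ha hr.1
        have h1 : (0:ℝ) < 1 + w * r := by positivity
        rw [Real.norm_eq_abs, abs_of_nonneg (by positivity)]
        rw [div_le_iff₀ (by positivity)]
        nlinarith [hr.2, mul_pos hv0 hr0, sq_nonneg (w * r), mul_pos ha hr0]
      have hint2 : Integrable (fun r : ℝ => r / (w * (1 + w * r))) H := by
        refine (integrable_const (b / w)).mono' hmeas2 ?_
        filter_upwards [hHsupp] with r hr
        have hr0 : 0 < r := lt_of_lt_of_le ha hr.1
        have h1 : (0:ℝ) < 1 + w * r := by positivity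
        rw [Real.norm_eq_abs, abs_of_nonneg (by positivity)]
        rw [div_le_div_iff₀ (by positivity) hv0]
        nlinarith [mul_pos hv0 hr0, hr.2, mul_pos (mul_pos hv0 hv0) (mul_pos hr0 (lt_of_lt_of_le hr0 hr.2))]
      have hcmp : J θ ≤ ∫ r, r / (w * (1 + w * r)) ∂H := by
        rw [hJ]
        refine integral_mono_ae hint1 hint2 ?_
        filter_upwards [hHsupp] with r hr
        have hr0 : 0 < r := lt_of_lt_of_le ha hr.1
        have h1 : (0:ℝ) < 1 + w * r := by positivity
        rw [div_le_div_iff₀ (by positivity) (by positivity)]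
        nlinarith [mul_pos hv0 hr0, mul_pos hr0 h1, mul_pos (mul_pos hr0 h1) h1]
      have heq : ∫ r, r / (w * (1 + w * r)) ∂H = (1 / w) * I := by
        rw [hIdef, ← integral_const_mul]
        congr 1
        funext r
        rw [div_mul_div_comm, one_mul]
      have hJle : J θ ≤ (1 / w) * I := heq ▸ hcmp
      have hθI : θ * I = 1 / w - lam := by linarith [hfix]
      have h3 : θ * J θ ≤ (1 / w) * (θ * I) := by
        nlinarith [mul_nonneg hθ0.le (sub_nonneg.2 hJle)]
      have h4 : (1 / w) * (θ * I) = (1 / w) ^ 2 - (1 / w) * lam := by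
        rw [hθI]; ring
      have h5 : 0 < (1 / w) * lam := by positivity
      linarith
    have hc : (0:ℝ) < (1 / w) ^ 2 := by positivity
    have hdθ : 0 < (1 / w) ^ 2 - θ * J θ := by linarith
    have hφJ : φ * J θ ≤ θ * J θ := mul_le_mul_of_nonneg_right hθ hJnn
    have hdφ : 0 < (1 / w) ^ 2 - φ * J θ := by linarith
    have htvφ : 0 ≤ tv φ θ := by
      rw [htv]
      exact div_nonneg (mul_nonneg hφ.le hJnn) hdφ.le
    have htvθ : 0 ≤ tv θ θ := by
      rw [htv]
      exact div_nonneg (mul_nonneg hθ0.le hJnn) hdθ.le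
    refine ⟨htcnn, htvφ, htvθ, ?_⟩
    intro m hm hmφ
    rw [htv, htv, ← mul_div_assoc, div_le_div_iff₀ hdφ hdθ]
    nlinarith [mul_nonneg (mul_nonneg hJnn hc.le) (by linarith : (0:ℝ) ≤ θ - m * φ),
      mul_nonneg (mul_nonneg (mul_nonneg hφ.le hθ0.le) (mul_nonneg hJnn hJnn))
        (by linarith : (0:ℝ) ≤ m - 1)]
  -- The subagging set is bounded below by 0
  have hBdd : BddBelow {x : ℝ | ∃ M : ℕ, 1 ≤ M ∧ ∃ θ : ℝ, φ ≤ θ ∧ x = Rsub M θ} := by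
    refine ⟨0, ?_⟩
    rintro x ⟨M, hM, θ, hθ, rfl⟩
    obtain ⟨htc0, htvφ, htvθ, _⟩ := pkg θ hθ
    have hM1 : (1:ℝ) ≤ (M:ℝ) := by exact_mod_cast hM
    have hMpos : (0:ℝ) < (M:ℝ) := by linarith
    have hu0 : (0:ℝ) ≤ 1 / (M:ℝ) := by positivity
    have hu1 : 1 / (M:ℝ) ≤ 1 := by rw [div_le_one hMpos]; exact hM1
    have hX : 0 ≤ B θ θ + V θ θ := by
      rw [hB, hV]
      have := add_nonneg
        (mul_nonneg (mul_nonneg hρ2 (by linarith : (0:ℝ) ≤ 1 + tv θ θ)) htc0)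
        (mul_nonneg hσ2 htvθ)
      linarith
    have hY : 0 ≤ B φ θ + V φ θ := by
      rw [hB, hV]
      have := add_nonneg
        (mul_nonneg (mul_nonneg hρ2 (by linarith : (0:ℝ) ≤ 1 + tv φ θ)) htc0)
        (mul_nonneg hσ2 htvφ)
      linarith
    rw [hRsub]
    nlinarith [mul_nonneg hu0 hX, mul_nonneg (by linarith : (0:ℝ) ≤ 1 - 1 / (M:ℝ)) hY]
  -- splagging set nonempty
  have hTne : {x : ℝ | ∃ M : ℕ, 1 ≤ M ∧ ∃ θ : ℝ, φ ≤ θ ∧ x = Rspl M θ}.Nonempty :=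
    ⟨Rspl 1 φ, 1, le_refl 1, φ, le_refl φ, rfl⟩
  refine le_csInf hTne ?_
  rintro x ⟨M, hM, θ, hθ, rfl⟩
  obtain ⟨htc0, htvφ, htvθ, hmono⟩ := pkg θ hθ
  have hθ0 : 0 < θ := lt_of_lt_of_le hφ hθ
  obtain ⟨m, hmdef⟩ : ∃ m, min M ⌊θ / φ⌋₊ = m := ⟨_, rfl⟩
  have hfl : 1 ≤ ⌊θ / φ⌋₊ := by
    rw [Nat.le_floor_iff (by positivity)]
    rw [Nat.cast_one, le_div_iff₀ hφ]
    linarith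
  have hm1 : 1 ≤ m := hmdef ▸ le_min hM hfl
  have hmR : (1:ℝ) ≤ (m:ℝ) := by exact_mod_cast hm1
  have hm0 : (0:ℝ) < (m:ℝ) := by linarith
  have hmφ : (m:ℝ) * φ ≤ θ := by
    have h1 : (m:ℝ) ≤ (⌊θ / φ⌋₊ : ℝ) := by exact_mod_cast hmdef ▸ min_le_right M ⌊θ / φ⌋₊
    have h2 : (⌊θ / φ⌋₊ : ℝ) ≤ θ / φ := Nat.floor_le (by positivity)
    rw [← le_div_iff₀ hφ]
    linarith
  have hkey : (m:ℝ) * tv φ θ ≤ tv θ θ := hmono _ hmR hmφ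
  have hsum : 0 ≤ ρ2 * tc θ + σ2 := add_nonneg (mul_nonneg hρ2 htc0) hσ2
  -- The M → ∞ subagging limit is below the splagging risk
  have hL : σ2 + B φ θ + V φ θ ≤ Rspl M θ := by
    have e : Rspl M θ - (σ2 + B φ θ + V φ θ)
        = (1 / (m:ℝ)) * ((ρ2 * tc θ + σ2) * (tv θ θ - (m:ℝ) * tv φ θ)) := by
      have hmul : (1 / (m:ℝ)) * (m:ℝ) = 1 := by field_simp
      rw [hRspl, hB θ θ, hV θ θ, hB φ θ, hV φ θ, hmdef]
      linear_combination ((ρ2 * tc θ + σ2) * tv φ θ) * hmul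
    have hnn : 0 ≤ (1 / (m:ℝ)) * ((ρ2 * tc θ + σ2) * (tv θ θ - (m:ℝ) * tv φ θ)) :=
      mul_nonneg (by positivity) (mul_nonneg hsum (by linarith))
    linarith
  -- The subagging infimum is below the M → ∞ limit
  have hInf : sInf {x : ℝ | ∃ M : ℕ, 1 ≤ M ∧ ∃ θ : ℝ, φ ≤ θ ∧ x = Rsub M θ}
      ≤ σ2 + B φ θ + V φ θ := by
    refine le_of_forall_pos_le_add ?_
    intro ε hε
    have h1 : tv φ θ ≤ tv θ θ := by
      have := hmono 1 le_rfl (by linarith)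
      linarith
    have hD : 0 ≤ (ρ2 * tc θ + σ2) * (tv θ θ - tv φ θ) :=
      mul_nonneg hsum (by linarith)
    obtain ⟨k, hk⟩ := exists_nat_gt ((ρ2 * tc θ + σ2) * (tv θ θ - tv φ θ) / ε)
    have hkpos : (0:ℝ) < ((k + 1 : ℕ) : ℝ) := by positivity
    have e2 : Rsub (k + 1) θ = (σ2 + B φ θ + V φ θ)
        + (1 / ((k + 1 : ℕ) : ℝ)) * ((ρ2 * tc θ + σ2) * (tv θ θ - tv φ θ)) := by
      rw [hRsub, hB θ θ, hV θ θ, hB φ θ, hV φ θ]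
      ring
    have hkε : (ρ2 * tc θ + σ2) * (tv θ θ - tv φ θ) < (k:ℝ) * ε :=
      (div_lt_iff₀ hε).mp hk
    have hcast : ((k + 1 : ℕ) : ℝ) = (k:ℝ) + 1 := by push_cast; ring
    have h3 : (1 / ((k + 1 : ℕ) : ℝ)) * ((ρ2 * tc θ + σ2) * (tv θ θ - tv φ θ)) ≤ ε := by
      rw [one_div_mul_eq_div, div_le_iff₀ hkpos, hcast]
      nlinarith
    have hmem : Rsub (k + 1) θ ∈ {x : ℝ | ∃ M : ℕ, 1 ≤ M ∧ ∃ θ : ℝ, φ ≤ θ ∧ x = Rsub M θ} :=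
      ⟨k + 1, by omega, θ, hθ, rfl⟩
    have h4 := csInf_le hBdd hmem
    linarith
  exact le_trans hInf hL
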